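/- For every n ≥ 1 there exists a DAG G=(V,E) with |V| = n(n+2), width n, such that every path cover of size n uses every edge of G, and |E|/|V| = 2 − 4/(n+2). Hence the factor 2 in the bound 'every DAG has a width-preserving spanning subgraph with fewer than 2|V| edges' is asymptotically tight. -/

import Mathlib

open Finset

section Prelude

variable {V : Type*}

/-- A (directed) path in the graph with edge relation `E`: nonempty, consecutive
vertices joined by edges, and vertices pairwise distinct. -/
def IsPathOn (E : V → V → Prop) (p : List V) : Prop :=
  p ≠ [] ∧ p.Chain' E ∧ p.Nodup

/-- Reachability in the graph with edge relation `E`. -/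
def Reaches (E : V → V → Prop) : V → V → Prop := Relation.ReflTransGen E

/-- The edges of a path, as the list of consecutive pairs of vertices. -/
def pathEdges (p : List V) : List (V × V) := p.zip p.tail

/-- A path cover: a multiset of paths such that every vertex is on some path. -/
def IsPathCover (E : V → V → Prop) (P : Multiset (List V)) : Prop :=
  (∀ p ∈ P, IsPathOn E p) ∧ ∀ v : V, ∃ p ∈ P, v ∈ p

/-- The width of a graph: the minimum size of a path cover. -/
noncomputable def gwidth (E : V → V → Prop) : ℕ :=
  sInf {n | ∃ P : Multiset (List V), IsPathCover E P ∧ Multiset.card P = n}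

/-- A DAG: no proper (directed) cycles. -/
def IsDAG (E : V → V → Prop) : Prop := ∀ v, ¬ Relation.TransGen E v v

/-- The edge relation of a finite edge set. -/
def edgeRel (E : Finset (V × V)) : V → V → Prop := fun a b => (a, b) ∈ E

/-- Multiplicity of an edge with respect to a multiset of paths. -/
def mult [DecidableEq V] (P : Multiset (List V)) (e : V × V) : ℕ :=
  Multiset.countP (fun p => e ∈ pathEdges p) P

/-- A flow network: a finite edge set, source, sink, and lower bounds (demands). -/
structure FlowNet (V : Type*) where
  E : Finset (V × V)
  s : V
  t : V
  d : V × V → ℕ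

/-- A flow: supported on edges, satisfying the demands, and flow conservation at
every vertex other than the source and the sink. -/
def IsFlow [Fintype V] (N : FlowNet V) (f : V × V → ℕ) : Prop :=
  (∀ e, e ∉ N.E → f e = 0) ∧ (∀ e ∈ N.E, N.d e ≤ f e) ∧
  ∀ v : V, v ≠ N.s → v ≠ N.t → (∑ u : V, f (u, v)) = ∑ u : V, f (v, u)

/-- The size of a flow: net outflow at the source. -/
def flowSize [Fintype V] (N : FlowNet V) (f : V × V → ℕ) : ℤ :=
  (∑ u : V, (f (N.s, u) : ℤ)) - ∑ u : V, (f (u, N.s) : ℤ)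

/-- An `st`-cut, given by the source side `S` (the sink side is the complement). -/
def IsCut (N : FlowNet V) (S : Set V) : Prop := N.s ∈ S ∧ N.t ∉ S

/-- A one-way cut: a cut with no edge crossing from `T = Sᶜ` to `S`. -/
def IsOwCut (N : FlowNet V) (S : Set V) : Prop :=
  IsCut N S ∧ ∀ e ∈ N.E, e.1 ∉ S → e.2 ∉ S

open Classical in
/-- The demand of a cut: sum of demands of edges crossing from `S` to `T`. -/
noncomputable def cutDemand (N : FlowNet V) (S : Set V) : ℕ :=
  ∑ e ∈ N.E.filter (fun e => e.1 ∈ S ∧ e.2 ∉ S), N.d e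

open Classical in
/-- The net flow across a cut: flow from `S` to `T` minus flow from `T` to `S`. -/
noncomputable def cutFlow (N : FlowNet V) (S : Set V) (f : V × V → ℕ) : ℤ :=
  (∑ e ∈ N.E.filter (fun e => e.1 ∈ S ∧ e.2 ∉ S), (f e : ℤ))
    - ∑ e ∈ N.E.filter (fun e => e.1 ∉ S ∧ e.2 ∈ S), (f e : ℤ)

/-- The residual graph of a network w.r.t. a flow `f`: reverse edges of all edges,
plus the edges whose flow strictly exceeds the demand. -/
def ResidualEdge (N : FlowNet V) (f : V × V → ℕ) (u v : V) : Prop :=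
  (v, u) ∈ N.E ∨ ((u, v) ∈ N.E ∧ N.d (u, v) < f (u, v))

/-- Vertices of the flow reduction: two copies of each vertex, plus source/sink. -/
abbrev FR (V : Type*) := (V ⊕ V) ⊕ Bool

def vinF (v : V) : FR V := Sum.inl (Sum.inl v)
def voutF (v : V) : FR V := Sum.inl (Sum.inr v)
def fsrc : FR V := Sum.inr false
def fsnk : FR V := Sum.inr true

/-- Demands of the flow reduction: `1` on each edge `(vin v, vout v)`, else `0`. -/
def redD [DecidableEq V] : FR V × FR V → ℕ
  | (Sum.inl (Sum.inl a), Sum.inl (Sum.inr b)) => if a = b then 1 else 0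
  | _ => 0

/-- The flow reduction of the DAG with edge set `E`. -/
def redNet [Fintype V] [DecidableEq V] (E : Finset (V × V)) : FlowNet (FR V) where
  E := (univ.image fun v : V => (fsrc, vinF v)) ∪ (univ.image fun v : V => (voutF v, fsnk))
        ∪ (univ.image fun v : V => (vinF v, voutF v))
        ∪ (E.image fun e => (voutF e.1, vinF e.2))
  s := fsrc
  t := fsnk
  d := redD

/-- The layered cut `L^{≤ l}`: the source together with all split vertices of level `≤ l`. -/
def layerCut (ℓ : FR V → ℤ) (l : ℤ) : Set (FR V) :=
  {x | x = fsrc ∨ ((∃ v : V, x = vinF v ∨ x = voutF v) ∧ ℓ x ≤ l)}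

open Classical in
/-- The layered antichain `A^l`. -/
noncomputable def layerAntichain [Fintype V] (ℓ : FR V → ℤ) (l : ℤ) : Finset V :=
  univ.filter (fun v => ℓ (vinF v) ≤ l ∧ l < ℓ (voutF v))

end Prelude

section Lists

variable {V : Type*} {E : V → V → Prop} {p : List V} {a b : V}

lemma pathEdges_cons₂ (x y : V) (t : List V) :
    pathEdges (x :: y :: t) = (x, y) :: pathEdges (y :: t) := rfl

lemma pathEdges_rel (h : p.Chain' E) : ∀ e ∈ pathEdges p, E e.1 e.2 := by
  induction p with
  | nil => simp [pathEdges]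
  | cons x t ih =>
    cases t with
    | nil => simp [pathEdges]
    | cons y s =>
      rw [pathEdges_cons₂]
      rintro e he
      rcases List.mem_cons.1 he with rfl | he
      · exact (List.isChain_cons_cons.1 h).1
      · exact ih (List.isChain_cons_cons.1 h).2 e he

lemma mem_head_or_pred (ha : a ∈ p) :
    p.head? = some a ∨ ∃ w, (w, a) ∈ pathEdges p := by
  induction p with
  | nil => simp at ha
  | cons x t ih =>
    rcases List.mem_cons.1 ha with rfl | ha
    · exact Or.inl rfl
    · rcases ih ha with h | ⟨w, hw⟩
      · cases t with
        | nil => simp at h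
        | cons y s =>
          simp only [List.head?_cons, Option.some.injEq] at h
          subst h
          exact Or.inr ⟨x, by simp [pathEdges_cons₂]⟩
      · cases t with
        | nil => simp [pathEdges] at hw
        | cons y s => exact Or.inr ⟨w, by simp [pathEdges_cons₂]; right; exact hw⟩

lemma mem_last_or_succ (ha : a ∈ p) :
    p.getLast? = some a ∨ ∃ w, (a, w) ∈ pathEdges p := by
  induction p with
  | nil => simp at ha
  | cons x t ih =>
    cases t with
    | nil =>
      simp at ha; subst ha; exact Or.inl rfl
    | cons y s =>
      rcases List.mem_cons.1 ha with rfl | ha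
      · exact Or.inr ⟨y, by simp [pathEdges_cons₂]⟩
      · rcases ih ha with h | ⟨w, hw⟩
        · left; rw [List.getLast?_cons_cons]; exact h
        · exact Or.inr ⟨w, by simp [pathEdges_cons₂]; right; exact hw⟩

lemma chain_transGen {t : List V} (h : List.Chain E a t) (hb : b ∈ t) :
    Relation.TransGen E a b := by
  induction t generalizing a with
  | nil => simp at hb
  | cons c s ih =>
    rcases List.chain_cons.1 h with ⟨hac, hcs⟩
    rcases List.mem_cons.1 hb with rfl | hb
    · exact Relation.TransGen.single hac
    · exact (Relation.TransGen.single hac).trans (ih hcs hb)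

lemma head_reaches (h : p.Chain' E) (hh : p.head? = some a) (hb : b ∈ p) :
    b = a ∨ Relation.TransGen E a b := by
  cases p with
  | nil => simp at hh
  | cons x t =>
    simp only [List.head?_cons, Option.some.injEq] at hh
    subst hh
    rcases List.mem_cons.1 hb with rfl | hb
    · exact Or.inl rfl
    · exact Or.inr (chain_transGen h hb)

lemma last_reaches (h : p.Chain' E) (hh : p.getLast? = some a) (hb : b ∈ p) :
    b = a ∨ Relation.TransGen E b a := by
  have h' : p.reverse.Chain' (flip E) := List.isChain_reverse.2 h
  have hh' : p.reverse.head? = some a := by rw [List.head?_reverse]; exact hh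
  rcases head_reaches h' hh' (List.mem_reverse.2 hb) with h1 | h1
  · exact Or.inl h1
  · exact Or.inr (Relation.transGen_swap.1 h1)

lemma path_trichotomy (h : p.Chain' E) (ha : a ∈ p) (hb : b ∈ p) :
    a = b ∨ Relation.TransGen E a b ∨ Relation.TransGen E b a := by
  induction p with
  | nil => simp at ha
  | cons x t ih =>
    rcases List.mem_cons.1 ha with rfl | ha'
    · rcases head_reaches h rfl hb with h1 | h1
      · exact Or.inl h1.symm
      · exact Or.inr (Or.inl h1)
    · rcases List.mem_cons.1 hb with rfl | hb'
      · rcases head_reaches h rfl ha with h1 | h1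
        · exact Or.inl h1
        · exact Or.inr (Or.inr h1)
      · exact ih h.tail ha' hb'

lemma msum_fsum {α β : Type*} (P : Multiset α) (s : Finset β) (f : β → α → ℕ) :
    (P.map fun p => ∑ j ∈ s, f j p).sum = ∑ j ∈ s, (P.map (f j)).sum := by
  induction P using Multiset.induction_on with
  | empty => simp
  | cons a t ih => simp [ih, Finset.sum_add_distrib]

end Lists

instance listMemDec {α : Type*} [DecidableEq α] (a : α) (l : List α) : Decidable (a ∈ l) :=
  decidable_of_iff (∃ x ∈ l, x = a) (by simp)

section Graph

variable {n : ℕ}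

abbrev Vt (n : ℕ) := Fin n ⊕ (Fin (n + 1) × Fin n)

def Ed (n : ℕ) : Finset (Vt n × Vt n) :=
  (univ.image fun q : Fin n × Fin n => ((Sum.inr (q.1.castSucc, q.2) : Vt n), Sum.inl q.1)) ∪
  (univ.image fun q : Fin n × Fin n => ((Sum.inl q.1 : Vt n), Sum.inr (q.1.succ, q.2)))

def lvl : Vt n → ℕ
  | Sum.inl k => 2 * k.val + 1
  | Sum.inr (k, _) => 2 * k.val

lemma mem_Ed {a b : Vt n} : (a, b) ∈ Ed n ↔
    (∃ k j : Fin n, a = Sum.inr (k.castSucc, j) ∧ b = Sum.inl k) ∨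
    (∃ k j : Fin n, a = Sum.inl k ∧ b = Sum.inr (k.succ, j)) := by
  simp only [Ed, Finset.mem_union, Finset.mem_image, Finset.mem_univ, true_and, Prod.ext_iff]
  constructor
  · rintro (⟨⟨k, j⟩, hk, hj⟩ | ⟨⟨k, j⟩, hk, hj⟩)
    · exact Or.inl ⟨k, j, hk.symm, hj.symm⟩
    · exact Or.inr ⟨k, j, hk.symm, hj.symm⟩
  · rintro (⟨k, j, ha, hb⟩ | ⟨k, j, ha, hb⟩)
    · exact Or.inl ⟨⟨k, j⟩, ha.symm, hb.symm⟩
    · exact Or.inr ⟨⟨k, j⟩, ha.symm, hb.symm⟩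

lemma lvl_lt {a b : Vt n} (h : edgeRel (Ed n) a b) : lvl a < lvl b := by
  rcases mem_Ed.1 h with ⟨k, j, rfl, rfl⟩ | ⟨k, j, rfl, rfl⟩ <;>
    simp [lvl, Fin.coe_castSucc, Fin.val_succ] <;> omega

lemma transGen_lvl {a b : Vt n} (h : Relation.TransGen (edgeRel (Ed n)) a b) :
    lvl a < lvl b := by
  induction h with
  | single h => exact lvl_lt h
  | tail _ h ih => exact ih.trans (lvl_lt h)

lemma dag_Ed : IsDAG (edgeRel (Ed n)) := fun v hv => lt_irrefl _ (transGen_lvl hv)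

lemma card_Ed : (Ed n).card = 2 * n ^ 2 := by
  rw [Ed, Finset.card_union_of_disjoint, Finset.card_image_of_injective,
    Finset.card_image_of_injective]
  · simp only [Finset.card_univ, Fintype.card_prod, Fintype.card_fin]; ring
  · rintro ⟨k, j⟩ ⟨k', j'⟩ h
    simp only [Prod.ext_iff, Sum.inl.injEq, Sum.inr.injEq, Fin.succ_inj] at h
    exact Prod.ext h.1 h.2.2
  · rintro ⟨k, j⟩ ⟨k', j'⟩ h
    simp only [Prod.ext_iff, Sum.inl.injEq, Sum.inr.injEq, Fin.castSucc_inj] at h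
    exact Prod.ext h.2 h.1.2
  · rw [Finset.disjoint_left]
    rintro ⟨a, b⟩ h1 h2
    simp only [Finset.mem_image, Finset.mem_univ, true_and, Prod.ext_iff] at h1 h2
    obtain ⟨q, hq, -⟩ := h1
    obtain ⟨q', hq', -⟩ := h2
    rw [← hq'] at hq
    exact absurd hq (by simp)

/-- At most one vertex of each layer in a path. -/
lemma layer_unique {p : List (Vt n)} (hp : p.Chain' (edgeRel (Ed n)))
    {m : Fin (n + 1)} {a b : Fin n}
    (ha : Sum.inr (m, a) ∈ p) (hb : Sum.inr (m, b) ∈ p) : a = b := by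
  rcases path_trichotomy hp ha hb with h | h | h
  · simpa using h
  · have := transGen_lvl h; simp [lvl] at this
  · have := transGen_lvl h; simp [lvl] at this

/-- Counting lemma: covers have ≥ n paths, and if exactly n, each path meets each layer. -/
lemma cover_count {P : Multiset (List (Vt n))} (hP : IsPathCover (edgeRel (Ed n)) P)
    (m : Fin (n + 1)) :
    n ≤ Multiset.card P ∧
      (Multiset.card P = n → ∀ p ∈ P, ∃ j : Fin n, Sum.inr (m, j) ∈ p) := by
  classical
  set c : List (Vt n) → ℕ := fun p => (univ.filter fun j : Fin n => (Sum.inr (m, j) : Vt n) ∈ p).card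
    with hc
  have h1 : ∀ p ∈ P, c p ≤ 1 := by
    intro p hp
    apply Finset.card_le_one.2
    intro a ha b hb
    simp only [Finset.mem_filter] at ha hb
    exact layer_unique (hP.1 p hp).2.1 ha.2 hb.2
  have h2 : n ≤ (P.map c).sum := by
    have : ∀ p, c p = ∑ j : Fin n, if Sum.inr (m, j) ∈ p then 1 else 0 := by
      intro p; exact Finset.card_filter _ _
    have hcsum : (P.map c).sum
        = ∑ j : Fin n, (P.map fun p => if Sum.inr (m, j) ∈ p then 1 else 0).sum := by
      rw [show c = fun p => ∑ j : Fin n, if Sum.inr (m, j) ∈ p then 1 else 0 from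
        funext this]
      exact msum_fsum P univ _
    calc n = ∑ _j : Fin n, 1 := by simp
    _ ≤ ∑ j : Fin n, (P.map fun p => if Sum.inr (m, j) ∈ p then 1 else 0).sum := by
        apply Finset.sum_le_sum
        intro j _
        obtain ⟨p, hpP, hvp⟩ := hP.2 (Sum.inr (m, j))
        have : (1 : ℕ) ∈ P.map fun p => if Sum.inr (m, j) ∈ p then 1 else 0 :=
          Multiset.mem_map.2 ⟨p, hpP, by simp [hvp]⟩
        exact Multiset.single_le_sum (fun x _ => Nat.zero_le x) _ this
    _ = (P.map c).sum := hcsum.symm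
  have h3 : (P.map c).sum ≤ Multiset.card P := by
    calc (P.map c).sum ≤ (P.map fun _ => 1).sum := by
          apply Multiset.sum_map_le_sum_map
          intro p hp; exact h1 p hp
    _ = Multiset.card P := by simp
  refine ⟨h2.trans h3, fun hcard p hp => ?_⟩
  by_contra hno
  push_neg at hno
  have hc0 : c p = 0 := by
    rw [hc]
    simp only [Finset.card_eq_zero, Finset.filter_eq_empty_iff]
    intro j _
    exact hno j
  obtain ⟨Q, rfl⟩ := Multiset.exists_cons_of_mem hp
  rw [Multiset.map_cons, Multiset.sum_cons, hc0, zero_add] at h2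
  have h3' : (Q.map c).sum ≤ Multiset.card Q := by
    calc (Q.map c).sum ≤ (Q.map fun _ => 1).sum := by
          apply Multiset.sum_map_le_sum_map
          intro q hq; exact h1 q (Multiset.mem_cons_of_mem hq)
    _ = Multiset.card Q := by simp
  rw [Multiset.card_cons] at hcard
  omega

end Graph

def fj (j : Fin n) (i : ℕ) : Vt n :=
  if i % 2 = 0 then
    Sum.inr (⟨min (i / 2) n, lt_of_le_of_lt (Nat.min_le_right _ _) (Nat.lt_succ_self n)⟩, j)
  else Sum.inl ⟨min (i / 2) (n - 1), lt_of_le_of_lt (Nat.min_le_right _ _) (Nat.sub_lt j.pos one_pos)⟩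

lemma fj_even (j : Fin n) (k : ℕ) (hk : k ≤ n) :
    fj j (2 * k) = Sum.inr (⟨k, Nat.lt_succ_of_le hk⟩, j) := by
  simp only [fj, Nat.mul_mod_right, if_pos rfl]
  congr 2
  simp [Nat.mul_div_cancel_left, Nat.min_eq_left hk]

lemma fj_odd (j : Fin n) (k : ℕ) (hk : k < n) :
    fj j (2 * k + 1) = Sum.inl ⟨k, hk⟩ := by
  have h1 : (2 * k + 1) % 2 = 1 := by omega
  have h2 : (2 * k + 1) / 2 = k := by omega
  simp only [fj, h1, one_ne_zero, if_false, Sum.inl.injEq]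
  apply Fin.ext
  simp only [h2]
  exact Nat.min_eq_left (by omega)

def pj (j : Fin n) : List (Vt n) := (List.range (2 * n + 1)).map (fj j)

lemma pj_path (j : Fin n) : IsPathOn (edgeRel (Ed n)) (pj j) := by
  refine ⟨by simp [pj, List.range_eq_nil], ?_, ?_⟩
  · rw [pj, List.Chain', List.isChain_map, show 2 * n + 1 = (2 * n) + 1 from rfl, List.isChain_range_succ]
    intro i hi
    show edgeRel (Ed n) (fj j i) (fj j (i + 1))
    rcases Nat.even_or_odd i with ⟨k, hk⟩ | ⟨k, hk⟩ <;> subst hk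
    · have hkn : k < n := by omega
      have e1 : fj j (k + k) = Sum.inr (⟨k, Nat.lt_succ_of_le hkn.le⟩, j) := by
        rw [show k + k = 2 * k from by ring]; exact fj_even j k hkn.le
      have e2 : fj j (k + k + 1) = Sum.inl ⟨k, hkn⟩ := by
        rw [show k + k + 1 = 2 * k + 1 from by ring]; exact fj_odd j k hkn
      rw [e1, e2]
      refine mem_Ed.2 (Or.inl ⟨⟨k, hkn⟩, j, ?_, rfl⟩)
      simp [Prod.ext_iff, Fin.ext_iff]
    · have hkn : k + 1 ≤ n := by omega
      have e1 : fj j (2 * k + 1) = Sum.inl ⟨k, by omega⟩ := fj_odd j k (by omega)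
      have e2 : fj j (2 * k + 1 + 1) = Sum.inr (⟨k + 1, Nat.lt_succ_of_le hkn⟩, j) := by
        rw [show 2 * k + 1 + 1 = 2 * (k + 1) from by ring]; exact fj_even j (k + 1) hkn
      rw [e1, e2]
      refine mem_Ed.2 (Or.inr ⟨(⟨k, by omega⟩ : Fin n), j, rfl, ?_⟩)
      simp [Prod.ext_iff, Fin.ext_iff]
  · rw [pj]
    apply List.Nodup.map_on _ List.nodup_range
    intro x hx y hy hxy
    rw [List.mem_range] at hx hy
    rcases Nat.even_or_odd x with ⟨a, ha⟩ | ⟨a, ha⟩ <;>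
      rcases Nat.even_or_odd y with ⟨b, hb⟩ | ⟨b, hb⟩ <;> subst ha <;> subst hb
    · rw [show a + a = 2 * a from by ring, show b + b = 2 * b from by ring,
        fj_even j a (by omega), fj_even j b (by omega)] at hxy
      simp only [Sum.inr.injEq, Prod.mk.injEq, Fin.mk.injEq] at hxy
      omega
    · rw [show a + a = 2 * a from by ring, fj_even j a (by omega),
        fj_odd j b (by omega)] at hxy
      exact absurd hxy (by simp)
    · rw [show b + b = 2 * b from by ring, fj_even j b (by omega),
        fj_odd j a (by omega)] at hxy
      exact absurd hxy (by simp)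
    · rw [fj_odd j a (by omega), fj_odd j b (by omega)] at hxy
      simp only [Sum.inl.injEq, Fin.mk.injEq] at hxy
      omega

def P0 (n : ℕ) : Multiset (List (Vt n)) := (univ : Finset (Fin n)).val.map pj

lemma P0_card : Multiset.card (P0 n) = n := by simp [P0]

lemma P0_cover : IsPathCover (edgeRel (Ed n)) (P0 n) := by
  constructor
  · intro p hp
    obtain ⟨j, -, rfl⟩ := Multiset.mem_map.1 hp
    exact pj_path j
  · rintro (k | ⟨m, j⟩)
    · refine ⟨pj k, Multiset.mem_map.2 ⟨k, by simp, rfl⟩, ?_⟩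
      rw [pj]
      refine List.mem_map.2 ⟨2 * k.val + 1, List.mem_range.2 (by omega), ?_⟩
      rw [fj_odd k k.val k.isLt]
    · refine ⟨pj j, Multiset.mem_map.2 ⟨j, by simp, rfl⟩, ?_⟩
      rw [pj]
      refine List.mem_map.2 ⟨2 * m.val, List.mem_range.2 (by omega), ?_⟩
      rw [fj_even j m.val (by omega)]

lemma gwidth_Ed : gwidth (edgeRel (Ed n)) = n := by
  rw [gwidth]
  apply le_antisymm
  · exact Nat.sInf_le (show n ∈ {m | ∃ P : Multiset (List (Vt n)), IsPathCover (edgeRel (Ed n)) P ∧ Multiset.card P = m} from ⟨P0 n, P0_cover, P0_card⟩)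
  · apply le_csInf
    · exact ⟨n, P0 n, P0_cover, P0_card⟩
    · rintro b ⟨P, hP, rfl⟩
      exact (cover_count hP 0).1

lemma edges_used {P : Multiset (List (Vt n))} (hP : IsPathCover (edgeRel (Ed n)) P)
    (hcard : Multiset.card P = n) :
    ∀ e ∈ Ed n, ∃ p ∈ P, e ∈ pathEdges p := by
  rintro ⟨a, b⟩ he
  rcases mem_Ed.1 he with ⟨k, j, rfl, rfl⟩ | ⟨k, j, rfl, rfl⟩
  · obtain ⟨p, hpP, hvp⟩ := hP.2 (Sum.inr (k.castSucc, j))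
    have hpath := hP.1 p hpP
    obtain ⟨j', hj'⟩ := (cover_count hP k.succ).2 hcard p hpP
    rcases mem_last_or_succ hvp with hlast | ⟨w, hw⟩
    · exfalso
      rcases last_reaches hpath.2.1 hlast hj' with h1 | h1
      · have := congrArg lvl h1
        simp [lvl] at this
      · have := transGen_lvl h1
        simp [lvl] at this
    · have hEw : edgeRel (Ed n) (Sum.inr (k.castSucc, j)) w :=
        pathEdges_rel hpath.2.1 _ hw
      rcases mem_Ed.1 hEw with ⟨k', j'', h1, rfl⟩ | ⟨k', j'', h1, h2⟩
      · have hk : k' = k := by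
          simp only [Sum.inr.injEq, Prod.mk.injEq, Fin.castSucc_inj] at h1
          exact h1.1.symm
        subst hk
        exact ⟨p, hpP, hw⟩
      · exact absurd h1 (by simp)
  · obtain ⟨p, hpP, hvp⟩ := hP.2 (Sum.inr (k.succ, j))
    have hpath := hP.1 p hpP
    obtain ⟨j', hj'⟩ := (cover_count hP k.castSucc).2 hcard p hpP
    rcases mem_head_or_pred hvp with hhead | ⟨w, hw⟩
    · exfalso
      rcases head_reaches hpath.2.1 hhead hj' with h1 | h1
      · have := congrArg lvl h1
        simp [lvl] at this
      · have := transGen_lvl h1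
        simp [lvl] at this
    · have hEw : edgeRel (Ed n) w (Sum.inr (k.succ, j)) :=
        pathEdges_rel hpath.2.1 _ hw
      rcases mem_Ed.1 hEw with ⟨k', j'', rfl, h2⟩ | ⟨k', j'', rfl, h2⟩
      · exact absurd h2 (by simp)
      · have hk : k' = k := by
          simp only [Sum.inr.injEq, Prod.mk.injEq, Fin.succ_inj] at h2
          exact h2.1.symm
        subst hk
        exact ⟨p, hpP, hw⟩



/-- for every `n ≥ 1` there is a DAG with `n(n+2)` vertices, width `n`,
in which every path cover of size `n` uses every edge, and `|E|/|V| = 2 - 4/(n+2)`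
(indeed `|E| = 2n²`); hence the factor 2 in the sparsification bound is tight. -/
theorem stmt_14 (n : ℕ) (hn : 1 ≤ n) :
    ∃ (V : Type) (_ : Fintype V) (_ : DecidableEq V) (E : Finset (V × V)),
      Fintype.card V = n * (n + 2) ∧ IsDAG (edgeRel E) ∧ gwidth (edgeRel E) = n ∧
      (∀ P : Multiset (List V), IsPathCover (edgeRel E) P → Multiset.card P = n →
        ∀ e ∈ E, ∃ p ∈ P, e ∈ pathEdges p) ∧
      E.card = 2 * n ^ 2 ∧
      (E.card : ℚ) / (Fintype.card V : ℚ) = 2 - 4 / ((n : ℚ) + 2) := by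
  have hcV : Fintype.card (Vt n) = n * (n + 2) := by
    simp only [Fintype.card_sum, Fintype.card_prod, Fintype.card_fin]
    ring
  refine ⟨Vt n, inferInstance, inferInstance, Ed n, hcV, dag_Ed, gwidth_Ed,
    fun P hP hc => edges_used hP hc, card_Ed, ?_⟩
  rw [card_Ed, hcV]
  have h2 : (n : ℚ) + 2 ≠ 0 := by positivity
  have h0 : (n : ℚ) ≠ 0 := Nat.cast_ne_zero.2 (by omega)
  push_cast
  field_simp
  ring
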